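/- Let α ∈ (1/2, 1). For integer k ≥ 2 define p**ₖ = (α − αᵏ) / (1 − αᵏ − (1−α)ᵏ). Then for every k ≥ 2: (i) 1/2 ≤ p**ₖ < α, with p**₂ = 1/2; (ii) p**ₖ < p**ₖ₊₁ (the sequence is strictly increasing in k); and (iii) p**ₖ → α as k → ∞. -/

import Mathlib

theorem stmt_12 (α : ℝ) (hα : 1/2 < α ∧ α < 1)
    (pss : ℕ → ℝ)
    (hpss : ∀ k : ℕ, pss k = (α - α^k) / (1 - α^k - (1 - α)^k)) :
    (∀ k : ℕ, 2 ≤ k → 1/2 ≤ pss k ∧ pss k < α) ∧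
    pss 2 = 1/2 ∧
    (∀ k : ℕ, 2 ≤ k → pss k < pss (k + 1)) ∧
    Filter.Tendsto pss Filter.atTop (nhds α) := by
  obtain ⟨hα1, hα2⟩ := hα
  have ha0 : (0:ℝ) < α := by linarith
  have hb0 : (0:ℝ) < 1 - α := by linarith
  have hb1 : (1:ℝ) - α < 1 := by linarith
  -- denominator positivity for k ≥ 2
  have hD : ∀ k : ℕ, 2 ≤ k → 0 < 1 - α^k - (1-α)^k := by
    intro k hk
    have h1 : α^k ≤ α^2 := pow_le_pow_of_le_one ha0.le hα2.le hk
    have h2 : (1-α)^k ≤ (1-α)^2 := pow_le_pow_of_le_one hb0.le (by linarith) hk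
    nlinarith [sq_nonneg (2*α - 1)]
  -- key: α^k - (1-α)^k ≤ 2α - 1 for k ≥ 1
  have key : ∀ k : ℕ, 1 ≤ k → α^k - (1-α)^k ≤ 2*α - 1 := by
    intro k hk
    induction k with
    | zero => omega
    | succ n ih =>
      rcases Nat.eq_or_lt_of_le hk with h | h
      · simp [← h]; ring_nf; linarith
      · have hn : 1 ≤ n := by omega
        have IH := ih hn
        have hB : (1-α)^n ≤ 1 - α := by
          calc (1-α)^n ≤ (1-α)^1 := pow_le_pow_of_le_one hb0.le (by linarith) hn
          _ = 1 - α := pow_one _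
        have hBpos : 0 < (1-α)^n := pow_pos hb0 n
        rw [pow_succ, pow_succ]
        nlinarith
  refine ⟨?_, ?_, ?_, ?_⟩
  · -- bounds
    intro k hk
    have hDk := hD k hk
    rw [hpss k]
    constructor
    · rw [le_div_iff₀ hDk]
      have := key k (by omega)
      nlinarith
    · rw [div_lt_iff₀ hDk]
      obtain ⟨m, rfl⟩ : ∃ m, k = m + 2 := ⟨k - 2, by omega⟩
      have hab : (1-α)^(m+1) < α^(m+1) := pow_lt_pow_left₀ (by linarith) hb0.le (by omega)
      have hA : 0 < α^(m+1) := pow_pos ha0 _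
      have hB : 0 < (1-α)^(m+1) := pow_pos hb0 _
      have e1 : α^(m+2) = α^(m+1) * α := pow_succ α (m+1)
      have e2 : (1-α)^(m+2) = (1-α)^(m+1) * (1-α) := pow_succ (1-α) (m+1)
      rw [e1, e2]
      nlinarith [mul_pos (mul_pos ha0 hb0) (sub_pos.mpr hab)]
  · -- pss 2 = 1/2
    rw [hpss 2]
    have hD2 := hD 2 le_rfl
    rw [div_eq_iff (ne_of_gt hD2)]
    ring
  · -- strict monotonicity
    intro k hk
    have hDk := hD k hk
    have hDk1 := hD (k+1) (by omega)
    rw [hpss k, hpss (k+1)]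
    rw [div_lt_div_iff₀ hDk hDk1]
    obtain ⟨m, rfl⟩ : ∃ m, k = m + 2 := ⟨k - 2, by omega⟩
    have hab : (1-α)^m ≤ α^m := pow_le_pow_left₀ hb0.le (by linarith) m
    have hA : 0 < α^m := pow_pos ha0 m
    have hB : 0 < (1-α)^m := pow_pos hb0 m
    have hident :
        (α - α^(m+2+1))*(1 - α^(m+2) - (1-α)^(m+2))
          - (α - α^(m+2))*(1 - α^(m+2+1) - (1-α)^(m+2+1))
        = α^2*(1-α)^2*(α^m - (1-α)^m)
          + α^2*(1-α)^2*(α^m*(1-α)^m)*(2*α-1) := by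
      ring
    nlinarith [mul_pos (mul_pos (mul_pos (mul_pos (pow_pos ha0 2) (pow_pos hb0 2)) hA) hB) (show (0:ℝ) < 2*α-1 by linarith),
      mul_nonneg (mul_nonneg (pow_pos ha0 2).le (pow_pos hb0 2).le) (by linarith : (0:ℝ) ≤ α^m - (1-α)^m)]
  · -- limit
    have hfun : pss = fun k => (α - α^k) / (1 - α^k - (1-α)^k) := funext hpss
    rw [hfun]
    have hpa : Filter.Tendsto (fun k : ℕ => α^k) Filter.atTop (nhds 0) :=
      tendsto_pow_atTop_nhds_zero_of_lt_one ha0.le hα2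
    have hpb : Filter.Tendsto (fun k : ℕ => (1-α)^k) Filter.atTop (nhds 0) :=
      tendsto_pow_atTop_nhds_zero_of_lt_one hb0.le hb1
    have hnum : Filter.Tendsto (fun k : ℕ => α - α^k) Filter.atTop (nhds (α - 0)) :=
      tendsto_const_nhds.sub hpa
    have hden : Filter.Tendsto (fun k : ℕ => 1 - α^k - (1-α)^k) Filter.atTop (nhds (1 - 0 - 0)) :=
      (tendsto_const_nhds.sub hpa).sub hpb
    have := hnum.div hden (by norm_num)
    have h2 : (α - 0) / (1 - 0 - 0) = α := by norm_num
    rw [h2] at this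
    exact this
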